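/- The concave-case construction yields densities: Fix λ ∈ (0,1). For every ε ∈ (−ε̄, ε̄), the function f^ε is nonnegative on [0,1] and satisfies ∫_0^1 f^ε(x) dx = 1; that is, each f^ε is a probability density on [0,1]. -/

import Mathlib

open Set MeasureTheory

/-- `h̄ = (1 − √(1−λ))/2`. -/
noncomputable def hbar (lam : ℝ) : ℝ := (1 - Real.sqrt (1 - lam)) / 2

/-- `η̄ = (h̄·(1−h̄)^{1−λ}·(1−λ))⁻¹`. -/
noncomputable def etabar (lam : ℝ) : ℝ :=
  (hbar lam * (1 - hbar lam) ^ (1 - lam) * (1 - lam))⁻¹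

/-- `ε̄ = (1/2)·min(η̄, (2/3)·2^{−λ})`. -/
noncomputable def epsbar (lam : ℝ) : ℝ :=
  (1 / 2) * min (etabar lam) ((2 / 3) * (2:ℝ) ^ (-lam))

/-- The unnormalized density of the concave-case construction. -/
noncomputable def fBase (lam ε : ℝ) (x : ℝ) : ℝ :=
  (Ico (0:ℝ) (1/2)).indicator
      (fun x => ((2:ℝ) ^ (2 - lam) - 8 * hbar lam * ε) * x) x
    + (Icc (1/2 : ℝ) (1 - hbar lam)).indicator (fun x => x ^ (-(2 - lam))) x
    + (Ioc (1 - hbar lam) 1).indicator (fun _ => etabar lam + ε) x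

/-- The normalizing constant `c̄`, chosen so that `∫_0^1 f^0(x) dx = 1`. -/
noncomputable def cbar (lam : ℝ) : ℝ := (∫ x in (0:ℝ)..1, fBase lam 0 x)⁻¹

/-- The density `f^ε` of the concave-case construction. -/
noncomputable def fEps (lam ε : ℝ) (x : ℝ) : ℝ := cbar lam * fBase lam ε x


section Aux

variable {lam : ℝ}

lemma hbar_mem (hlam : lam ∈ Ioo (0:ℝ) 1) : hbar lam ∈ Ioo (0:ℝ) (1/2) := by
  have h0 : (0:ℝ) < 1 - lam := by linarith [hlam.2]
  have h1 : Real.sqrt (1 - lam) < 1 := by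
    have := Real.sqrt_lt_sqrt (le_of_lt h0) (show (1:ℝ) - lam < 1 by linarith [hlam.1])
    simpa using this
  have h2 : 0 < Real.sqrt (1 - lam) := Real.sqrt_pos.mpr h0
  constructor <;> (unfold hbar; linarith)

lemma etabar_pos (hlam : lam ∈ Ioo (0:ℝ) 1) : 0 < etabar lam := by
  have h := hbar_mem hlam
  have h1 : (0:ℝ) < 1 - hbar lam := by linarith [h.2]
  have h2 : (0:ℝ) < (1 - hbar lam) ^ (1 - lam) := Real.rpow_pos_of_pos h1 _
  have h3 : (0:ℝ) < 1 - lam := by linarith [hlam.2]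
  have h4 := h.1
  exact inv_pos.mpr (by positivity)

lemma epsbar_le_eta : epsbar lam ≤ etabar lam / 2 := by
  unfold epsbar
  have := min_le_left (etabar lam) ((2 / 3) * (2:ℝ) ^ (-lam))
  linarith

lemma epsbar_le_pow : epsbar lam ≤ (2:ℝ) ^ (-lam) / 3 := by
  unfold epsbar
  have := min_le_right (etabar lam) ((2 / 3) * (2:ℝ) ^ (-lam))
  linarith

lemma two_rpow_eq : (2:ℝ) ^ (2 - lam) = 4 * (2:ℝ) ^ (-lam) := by
  rw [show (2:ℝ) - lam = 2 + (-lam) by ring, Real.rpow_add (by norm_num)]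
  norm_num

lemma slope_nonneg (hlam : lam ∈ Ioo (0:ℝ) 1)
    (hε : ε ∈ Ioo (-epsbar lam) (epsbar lam)) :
    0 ≤ (2:ℝ) ^ (2 - lam) - 8 * hbar lam * ε := by
  have h := hbar_mem hlam
  have hp : (0:ℝ) < (2:ℝ) ^ (-lam) := Real.rpow_pos_of_pos (by norm_num) _
  have hεb : ε < (2:ℝ) ^ (-lam) / 3 := lt_of_lt_of_le hε.2 epsbar_le_pow
  have hεb' : -((2:ℝ) ^ (-lam) / 3) < ε := by
    have := epsbar_le_pow (lam := lam); linarith [hε.1]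
  rw [two_rpow_eq]
  nlinarith [h.1, h.2]

lemma eta_eps_nonneg (hlam : lam ∈ Ioo (0:ℝ) 1)
    (hε : ε ∈ Ioo (-epsbar lam) (epsbar lam)) : 0 ≤ etabar lam + ε := by
  have h1 := etabar_pos hlam
  have h2 := epsbar_le_eta (lam := lam)
  linarith [hε.1]

lemma fBase_nonneg (hlam : lam ∈ Ioo (0:ℝ) 1)
    (hε : ε ∈ Ioo (-epsbar lam) (epsbar lam)) (x : ℝ) : 0 ≤ fBase lam ε x := by
  unfold fBase
  have t1 : 0 ≤ (Ico (0:ℝ) (1/2)).indicator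
      (fun x => ((2:ℝ) ^ (2 - lam) - 8 * hbar lam * ε) * x) x := by
    apply Set.indicator_nonneg
    intro y hy
    exact mul_nonneg (slope_nonneg hlam hε) hy.1
  have t2 : 0 ≤ (Icc (1/2 : ℝ) (1 - hbar lam)).indicator
      (fun x => x ^ (-(2 - lam))) x := by
    apply Set.indicator_nonneg
    intro y hy
    exact Real.rpow_nonneg (by linarith [hy.1]) _
  have t3 : 0 ≤ (Ioc (1 - hbar lam) 1).indicator (fun _ => etabar lam + ε) x := by
    apply Set.indicator_nonneg
    intro y _
    exact eta_eps_nonneg hlam hε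
  linarith

lemma fBase_integral (hlam : lam ∈ Ioo (0:ℝ) 1) (ε : ℝ) :
    ∫ x in (0:ℝ)..1, fBase lam ε x
      = ((2:ℝ) ^ (2 - lam) - 8 * hbar lam * ε) / 8
        + (∫ x in (1/2:ℝ)..(1 - hbar lam), x ^ (-(2 - lam)))
        + (etabar lam + ε) * hbar lam := by
  have hh := hbar_mem hlam
  have hh1 : (1:ℝ)/2 ≤ 1 - hbar lam := by linarith [hh.2]
  have hh2 : 1 - hbar lam ≤ 1 := by linarith [hh.1]
  set A := (2:ℝ) ^ (2 - lam) - 8 * hbar lam * ε with hA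
  set f1 : ℝ → ℝ := (Ico (0:ℝ) (1/2)).indicator (fun x => A * x) with hf1
  set f2 : ℝ → ℝ := (Icc (1/2 : ℝ) (1 - hbar lam)).indicator (fun x => x ^ (-(2 - lam))) with hf2
  set f3 : ℝ → ℝ := (Ioc (1 - hbar lam) 1).indicator (fun _ => etabar lam + ε) with hf3
  have hif1 : Integrable f1 := by
    apply IntegrableOn.integrable_indicator _ measurableSet_Ico
    exact ((continuous_const.mul continuous_id).integrableOn_Icc).mono_set Ico_subset_Icc_self
  have hif2 : Integrable f2 := by
    apply IntegrableOn.integrable_indicator _ measurableSet_Icc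
    apply ContinuousOn.integrableOn_Icc
    intro y hy
    exact (Real.continuousAt_rpow_const y _ (Or.inl (by linarith [hy.1]))).continuousWithinAt
  have hif3 : Integrable f3 := by
    apply IntegrableOn.integrable_indicator _ measurableSet_Ioc
    exact (integrableOn_const_iff (C := etabar lam + ε)).mpr (Or.inr (by rw [Real.volume_Ioc]; exact ENNReal.ofReal_lt_top))
  have heq : (fun x => fBase lam ε x) = fun x => f1 x + f2 x + f3 x := rfl
  rw [heq, intervalIntegral.integral_of_le (by norm_num : (0:ℝ) ≤ 1)]
  rw [integral_add (f := fun x => f1 x + f2 x) (g := f3)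
      ((hif1.add hif2).integrableOn) hif3.integrableOn,
    integral_add (f := f1) (g := f2) hif1.integrableOn hif2.integrableOn]
  have e1 : ∫ x in Ioc (0:ℝ) 1, f1 x = A / 8 := by
    rw [hf1, setIntegral_indicator measurableSet_Ico,
      show Ioc (0:ℝ) 1 ∩ Ico 0 (1/2) = Ioo 0 (1/2) by
        ext x; simp only [mem_inter_iff, mem_Ioc, mem_Ico, mem_Ioo]
        constructor
        · rintro ⟨⟨a, b⟩, c, d⟩; exact ⟨a, d⟩
        · rintro ⟨a, b⟩; exact ⟨⟨a, by linarith⟩, le_of_lt a, b⟩,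
      setIntegral_congr_set Ioo_ae_eq_Ioc,
      ← intervalIntegral.integral_of_le (by norm_num : (0:ℝ) ≤ 1/2),
      intervalIntegral.integral_const_mul, integral_id]
    ring
  have e2 : ∫ x in Ioc (0:ℝ) 1, f2 x
      = ∫ x in (1/2:ℝ)..(1 - hbar lam), x ^ (-(2 - lam)) := by
    rw [hf2, setIntegral_indicator measurableSet_Icc,
      show Ioc (0:ℝ) 1 ∩ Icc (1/2) (1 - hbar lam) = Icc (1/2) (1 - hbar lam) by
        apply inter_eq_right.mpr
        intro x hx
        simp only [mem_Icc] at hx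
        exact ⟨by linarith [hx.1], by linarith [hx.2]⟩,
      ← setIntegral_congr_set Ioc_ae_eq_Icc,
      ← intervalIntegral.integral_of_le hh1]
  have e3 : ∫ x in Ioc (0:ℝ) 1, f3 x = (etabar lam + ε) * hbar lam := by
    rw [hf3, setIntegral_indicator measurableSet_Ioc,
      show Ioc (0:ℝ) 1 ∩ Ioc (1 - hbar lam) 1 = Ioc (1 - hbar lam) 1 by
        apply inter_eq_right.mpr
        intro x hx
        simp only [mem_Ioc] at hx
        exact ⟨by linarith [hx.1], hx.2⟩,
      setIntegral_const, Real.volume_real_Ioc_of_le (by linarith [hh.1]), smul_eq_mul]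
    ring
  rw [e1, e2, e3]

lemma fBase_integral_pos (hlam : lam ∈ Ioo (0:ℝ) 1) :
    0 < ∫ x in (0:ℝ)..1, fBase lam 0 x := by
  have hh := hbar_mem hlam
  have hh1 : (1:ℝ)/2 ≤ 1 - hbar lam := by linarith [hh.2]
  rw [fBase_integral hlam 0]
  have h1 : (0:ℝ) < (2:ℝ) ^ (2 - lam) := Real.rpow_pos_of_pos (by norm_num) _
  have h2 : 0 ≤ ∫ x in (1/2:ℝ)..(1 - hbar lam), x ^ (-(2 - lam)) := by
    apply intervalIntegral.integral_nonneg hh1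
    intro u hu
    exact Real.rpow_nonneg (by linarith [hu.1]) _
  have h3 : 0 < etabar lam * hbar lam := mul_pos (etabar_pos hlam) hh.1
  nlinarith

end Aux

/-- The concave-case construction yields densities: for `λ ∈ (0,1)` and every
`ε ∈ (−ε̄, ε̄)`, the function `f^ε` is nonnegative on `[0,1]` and `∫_0^1 f^ε(x) dx = 1`. -/
theorem concave_construction_density (lam : ℝ) (hlam : lam ∈ Ioo (0:ℝ) 1)
    (ε : ℝ) (hε : ε ∈ Ioo (-epsbar lam) (epsbar lam)) :
    (∀ x ∈ Icc (0:ℝ) 1, 0 ≤ fEps lam ε x) ∧ (∫ x in (0:ℝ)..1, fEps lam ε x) = 1 := by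
  have hpos := fBase_integral_pos hlam
  have hcb : 0 < cbar lam := inv_pos.mpr hpos
  constructor
  · intro x _
    exact mul_nonneg hcb.le (fBase_nonneg hlam hε x)
  · have : (∫ x in (0:ℝ)..1, fEps lam ε x) = cbar lam * ∫ x in (0:ℝ)..1, fBase lam ε x := by
      unfold fEps
      exact intervalIntegral.integral_const_mul _ _
    rw [this, fBase_integral hlam ε, cbar, show
      ((2:ℝ) ^ (2 - lam) - 8 * hbar lam * ε) / 8
        + (∫ x in (1/2:ℝ)..(1 - hbar lam), x ^ (-(2 - lam)))
        + (etabar lam + ε) * hbar lam = ∫ x in (0:ℝ)..1, fBase lam 0 x by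
      rw [fBase_integral hlam 0]; ring]
    exact inv_mul_cancel₀ hpos.ne'
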